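/- Let ω be a modulus of continuity of order n ∈ ℕ, let D ⊆ ℝ^d be a domain, let f ∈ L¹_loc(D) with ‖f‖_{ω,D} < ∞, and let C₀ > 0. Then there exists a constant C = C(n,d,C₀,ω) such that for all cubes Q₁ ⊂ Q₂ ⊂ 4Q₁ contained in D and all polynomials P_{Q₁}, P_{Q₂} ∈ 𝒫_n of near best approximation with constant C₀ for f on Q₁ and Q₂ respectively, one has (1/|Q₂|)·∫_{Q₂} |P_{Q₁} − P_{Q₂}| dx ≤ C·ω(ℓ(Q₂))·‖f‖_{ω,D}. -/

import Mathlib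

open MeasureTheory Filter Set Metric
open scoped ENNReal Topology InnerProductSpace

noncomputable section

/-- The axis-parallel closed cube in `ℝ^d` with center `x₀` and side length `l`. -/
def cube {d : ℕ} (x₀ : EuclideanSpace ℝ (Fin d)) (l : ℝ) : Set (EuclideanSpace ℝ (Fin d)) :=
  {x | ∀ i, |x i - x₀ i| ≤ l / 2}

/-- `𝒫_n`: functions on `ℝ^d` given by polynomials of total degree at most `n`. -/
def PolyLE (d n : ℕ) : Set (EuclideanSpace ℝ (Fin d) → ℝ) :=
  {P | ∃ p : MvPolynomial (Fin d) ℝ, p.totalDegree ≤ n ∧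
    ∀ x, MvPolynomial.eval (fun i => x i) p = P x}

/-- The Campanato-type Zygmund seminorm `‖f‖_{ω,D}` (valued in `ℝ≥0∞`). -/
def zygSeminorm {d : ℕ} (ω : ℝ → ℝ) (n : ℕ) (D : Set (EuclideanSpace ℝ (Fin d)))
    (f : EuclideanSpace ℝ (Fin d) → ℝ) : ℝ≥0∞ :=
  ⨆ (x₀ : EuclideanSpace ℝ (Fin d)) (l : ℝ) (_ : 0 < l) (_ : cube x₀ l ⊆ D),
    ⨅ (P : EuclideanSpace ℝ (Fin d) → ℝ) (_ : P ∈ PolyLE d n),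
      (ENNReal.ofReal (ω l * l ^ d))⁻¹ * ∫⁻ x in cube x₀ l, ENNReal.ofReal |f x - P x|

/-- The `L¹(D)` norm (valued in `ℝ≥0∞`). -/
def l1Norm {d : ℕ} (D : Set (EuclideanSpace ℝ (Fin d)))
    (f : EuclideanSpace ℝ (Fin d) → ℝ) : ℝ≥0∞ :=
  ∫⁻ x in D, ENNReal.ofReal |f x|

/-- The two regularity conditions of order `m` for a modulus of continuity:
`ω(t)/t^q` almost decreasing for some `m ≤ q < m+1`, and `ω(t)/t^r` almost
increasing for some `m-1 < r < m`. -/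
def ModulusConds (ω : ℝ → ℝ) (m : ℕ) : Prop :=
  (∃ q : ℝ, (m : ℝ) ≤ q ∧ q < (m : ℝ) + 1 ∧ ∃ C : ℝ, 0 < C ∧
      ∀ s t : ℝ, 1 < s → 0 < t → ω (s * t) ≤ C * s ^ q * ω t) ∧
  (∃ r : ℝ, (m : ℝ) - 1 < r ∧ r < (m : ℝ) ∧ ∃ C : ℝ, 0 < C ∧
      ∀ s t : ℝ, 0 < s → s < 1 → 0 < t → ω (s * t) ≤ C * s ^ r * ω t)

/-- `ω` is a modulus of continuity of order `n`: continuous, increasing, `ω(0)=0`,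
nonnegative, and `n` is the smallest positive integer satisfying the two
regularity conditions. -/
structure IsModulusOfOrder (ω : ℝ → ℝ) (n : ℕ) : Prop where
  continuousOn : ContinuousOn ω (Set.Ici 0)
  monotoneOn : MonotoneOn ω (Set.Ici 0)
  nonneg : ∀ t, 0 ≤ t → 0 ≤ ω t
  map_zero : ω 0 = 0
  npos : 0 < n
  conds : ModulusConds ω n
  minimal : ∀ m : ℕ, 0 < m → ModulusConds ω m → n ≤ m

/-- `ξ(r) = ∫_r^1 ω(t) t^{-n-1} dt`. -/
def xi (ω : ℝ → ℝ) (n : ℕ) (r : ℝ) : ℝ :=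
  ∫ t in Set.Ioc r 1, ω t / t ^ (n + 1)

/-- The associated modulus of continuity `ω̃(x) = ω(x)/max{1, ξ(x)}`. -/
def omegaTilde (ω : ℝ → ℝ) (n : ℕ) (x : ℝ) : ℝ :=
  ω x / max 1 (xi ω n x)

/-- `D ⊂ ℝ^d` is a bounded Lipschitz domain: it is open, connected, bounded, and near
every boundary point, after a rigid motion, it coincides inside an `R`-window with the
region above the graph of a Lipschitz function (with Lipschitz constant at most `δ`). -/
def IsLipschitzDomain {d : ℕ} (D : Set (EuclideanSpace ℝ (Fin d))) : Prop :=
  IsOpen D ∧ IsConnected D ∧ Bornology.IsBounded D ∧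
  ∃ δ R : ℝ, 0 < δ ∧ 0 < R ∧
    ∀ a ∈ frontier D,
      ∃ (g : EuclideanSpace ℝ (Fin d) ≃ᵢ EuclideanSpace ℝ (Fin d)) (j : Fin d)
        (A : EuclideanSpace ℝ (Fin d) → ℝ),
        g a = 0 ∧
        LipschitzWith (Real.toNNReal δ) A ∧
        (∀ x y : EuclideanSpace ℝ (Fin d), (∀ i, i ≠ j → x i = y i) → A x = A y) ∧
        (g '' D) ∩ cube 0 R = {x ∈ cube (0 : EuclideanSpace ℝ (Fin d)) R | A x < x j}

/-- `Ω` is the density of a `C^k`-smooth homogeneous Calderón–Zygmund kernel: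
homogeneous of degree `0`, `C^k` away from the origin, with zero mean on the
unit sphere. -/
structure IsCZDensity (d : ℕ) (k : ℕ∞) (Ω : EuclideanSpace ℝ (Fin d) → ℝ) : Prop where
  homog : ∀ c : ℝ, 0 < c → ∀ x : EuclideanSpace ℝ (Fin d), Ω (c • x) = Ω x
  smooth : ContDiffOn ℝ k Ω {x : EuclideanSpace ℝ (Fin d) | x ≠ 0}
  meanZero : ∫ x : Metric.sphere (0 : EuclideanSpace ℝ (Fin d)) 1,
      Ω x ∂((volume : Measure (EuclideanSpace ℝ (Fin d))).toSphere) = 0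

/-- `g = T_D f`: `g` vanishes off `D` and, for a.e. `y ∈ D`, `g y` is the principal
value `lim_{ε→0+} ∫_{x ∈ D, |y-x|>ε} f(x) K(y-x) dx` (here `f` is implicitly
multiplied by `χ_D`). -/
def IsRestrictedCZ {d : ℕ} (D : Set (EuclideanSpace ℝ (Fin d)))
    (K : EuclideanSpace ℝ (Fin d) → ℝ) (f g : EuclideanSpace ℝ (Fin d) → ℝ) : Prop :=
  (∀ y, y ∉ D → g y = 0) ∧
  ∀ᵐ y ∂(volume.restrict D),
    Tendsto (fun ε : ℝ => ∫ x in {x ∈ D | ε < dist y x}, f x * K (y - x))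
      (𝓝[>] (0 : ℝ)) (𝓝 (g y))

/-- `P` is a polynomial of near best approximation (with constant `C₀`) for `f`
on the cube with center `x₀` and side length `l`. -/
def IsNearBestApprox {d : ℕ} (ω : ℝ → ℝ) (n : ℕ) (D : Set (EuclideanSpace ℝ (Fin d)))
    (f : EuclideanSpace ℝ (Fin d) → ℝ) (C₀ : ℝ) (x₀ : EuclideanSpace ℝ (Fin d)) (l : ℝ)
    (P : EuclideanSpace ℝ (Fin d) → ℝ) : Prop :=
  P ∈ PolyLE d n ∧
    (ENNReal.ofReal (l ^ d))⁻¹ * ∫⁻ x in cube x₀ l, ENNReal.ofReal |f x - P x| ≤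
      ENNReal.ofReal (C₀ * ω l) * zygSeminorm ω n D f



section Helpers

open MvPolynomial Module

set_option maxHeartbeats 1000000
set_option synthInstance.maxHeartbeats 1000000

variable {d n : ℕ}

lemma continuous_coord (i : Fin d) : Continuous fun x : EuclideanSpace ℝ (Fin d) => x i :=
  (continuous_apply i).comp (PiLp.continuousLinearEquiv 2 ℝ _).continuous

lemma isClosed_cube (x₀ : EuclideanSpace ℝ (Fin d)) (l : ℝ) : IsClosed (cube x₀ l) := by
  have : cube x₀ l = ⋂ i, {x : EuclideanSpace ℝ (Fin d) | |x i - x₀ i| ≤ l / 2} := by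
    ext x; simp [cube, Set.mem_iInter]
  rw [this]
  exact isClosed_iInter fun i =>
    isClosed_le (((continuous_coord i).sub continuous_const).abs) continuous_const

lemma isCompact_cube (x₀ : EuclideanSpace ℝ (Fin d)) {l : ℝ} (hl : 0 ≤ l) :
    IsCompact (cube x₀ l) := by
  refine Metric.isCompact_of_isClosed_isBounded (isClosed_cube x₀ l) ?_
  refine (Metric.isBounded_iff_subset_closedBall x₀).2 ⟨Real.sqrt d * (l / 2), fun x hx => ?_⟩
  have : dist x x₀ ≤ Real.sqrt (∑ _i : Fin d, (l / 2) ^ 2) := by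
    rw [EuclideanSpace.dist_eq]
    apply Real.sqrt_le_sqrt
    apply Finset.sum_le_sum
    intro i _
    have h1 := hx i
    have h2 : |x i - x₀ i| = dist (x i) (x₀ i) := (Real.dist_eq _ _).symm
    nlinarith [abs_nonneg (x i - x₀ i), dist_nonneg (x := x i) (y := x₀ i)]
  refine Metric.mem_closedBall.2 (this.trans ?_)
  rw [Finset.sum_const, Finset.card_univ, Fintype.card_fin, nsmul_eq_mul]
  rw [Real.sqrt_mul (by positivity), Real.sqrt_sq (by positivity)]

lemma measurableSet_cube (x₀ : EuclideanSpace ℝ (Fin d)) (l : ℝ) :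
    MeasurableSet (cube x₀ l) := (isClosed_cube x₀ l).measurableSet

lemma polyLE_continuous {P : EuclideanSpace ℝ (Fin d) → ℝ} (hP : P ∈ PolyLE d n) :
    Continuous P := by
  obtain ⟨p, -, hp⟩ := hP
  have : Continuous fun x : EuclideanSpace ℝ (Fin d) =>
      MvPolynomial.eval (fun i => x i) p := by
    exact (MvPolynomial.continuous_eval p).comp (continuous_pi continuous_coord)
  simpa only [funext hp] using this

lemma polyLE_sub {P Q : EuclideanSpace ℝ (Fin d) → ℝ} (hP : P ∈ PolyLE d n)
    (hQ : Q ∈ PolyLE d n) : (fun x => P x - Q x) ∈ PolyLE d n := by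
  obtain ⟨p, hpd, hp⟩ := hP
  obtain ⟨q, hqd, hq⟩ := hQ
  refine ⟨p - q, ?_, fun x => by simp [hp x, hq x]⟩
  calc (p - q).totalDegree = (p + (-q)).totalDegree := by ring_nf
    _ ≤ max p.totalDegree (-q).totalDegree := MvPolynomial.totalDegree_add _ _
    _ ≤ n := by rw [MvPolynomial.totalDegree_neg]; exact max_le hpd hqd

lemma polyLE_const (c : ℝ) : (fun _ : EuclideanSpace ℝ (Fin d) => c) ∈ PolyLE d n :=
  ⟨MvPolynomial.C c, by simp [MvPolynomial.totalDegree_C], fun x => MvPolynomial.eval_C c⟩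

lemma polyLE_comp_affine {P : EuclideanSpace ℝ (Fin d) → ℝ} (hP : P ∈ PolyLE d n)
    (a : EuclideanSpace ℝ (Fin d)) (c : ℝ) :
    (fun y => P (a + c • y)) ∈ PolyLE d n := by
  obtain ⟨p, hpd, hp⟩ := hP
  refine ⟨eval₂ C (fun i => C (a i) + C c * X i) p, ?_, fun y => ?_⟩
  · rw [eval₂_eq]
    refine (totalDegree_finset_sum _ _).trans (Finset.sup_le fun s hs => ?_)
    calc (C (coeff s p) * ∏ i ∈ s.support, (C (a i) + C c * X i) ^ s i).totalDegree
        ≤ (C (coeff s p)).totalDegree +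
            (∏ i ∈ s.support, (C (a i) + C c * X i) ^ s i).totalDegree :=
          totalDegree_mul _ _
      _ ≤ 0 + ∑ i ∈ s.support, ((C (a i) + C c * X i) ^ s i).totalDegree := by
          gcongr
          · exact le_of_eq (totalDegree_C _)
          · exact totalDegree_finset_prod _ _
      _ ≤ ∑ i ∈ s.support, s i * 1 := by
          rw [zero_add]
          refine Finset.sum_le_sum fun i _ => ?_
          refine (totalDegree_pow _ _).trans ?_
          gcongr
          refine (totalDegree_add _ _).trans (max_le (by simp [totalDegree_C]) ?_)
          refine (totalDegree_mul _ _).trans ?_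
          simp [totalDegree_C, totalDegree_X]
      _ ≤ n := by
          simp only [mul_one]
          exact (le_totalDegree hs).trans hpd
  · show _ = P (a + c • y)
    rw [← hp (a + c • y), eval_eval₂]
    have h1 : ((eval fun i => y i).comp C) = RingHom.id ℝ := by
      ext r; simp
    rw [h1]
    have h2 : (fun s => (eval fun i => y i) (C (a s) + C c * X s))
        = fun i => (a + c • y) i := by
      funext i; simp [PiLp.add_apply, PiLp.smul_apply, smul_eq_mul]
    rw [h2, eval₂_id]

lemma preimage_affine_cube (x₁ : EuclideanSpace ℝ (Fin d)) {l : ℝ} (hl : 0 < l) (s : ℝ) :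
    (fun y : EuclideanSpace ℝ (Fin d) => x₁ + l • y) ⁻¹' cube x₁ s = cube 0 (s / l) := by
  have key : ∀ t : ℝ, |l * t| ≤ s / 2 ↔ |t| ≤ s / l / 2 := by
    intro t
    rw [abs_mul, abs_of_pos hl]
    constructor <;> intro h
    · rw [div_div, le_div_iff₀ (by positivity)]; nlinarith
    · rw [div_div, le_div_iff₀ (by positivity)] at h; nlinarith
  ext y
  simp only [cube, Set.mem_preimage, Set.mem_setOf_eq, PiLp.add_apply, PiLp.smul_apply,
    smul_eq_mul, PiLp.zero_apply, sub_zero, add_sub_cancel_left]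
  exact forall_congr' fun i => key (y i)

lemma analytic_eval (p : MvPolynomial (Fin d) ℝ) :
    AnalyticOnNhd ℝ (fun x : EuclideanSpace ℝ (Fin d) =>
      MvPolynomial.eval (fun i => x i) p) Set.univ := by
  have := AnalyticOnNhd.eval_continuousLinearMap
    ((PiLp.continuousLinearEquiv 2 ℝ (fun _ : Fin d => ℝ)) :
      EuclideanSpace ℝ (Fin d) →L[ℝ] (Fin d → ℝ)) p
  exact this

lemma poly_eq_zero_of_zero_on_box {p : MvPolynomial (Fin d) ℝ}
    (h : ∀ x : EuclideanSpace ℝ (Fin d), (∀ i, |x i| < 1 / 2) →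
      MvPolynomial.eval (fun i => x i) p = 0) : p = 0 := by
  set f : EuclideanSpace ℝ (Fin d) → ℝ := fun x => MvPolynomial.eval (fun i => x i) p with hf
  have hbox : IsOpen {x : EuclideanSpace ℝ (Fin d) | ∀ i, |x i| < 1 / 2} := by
    have : {x : EuclideanSpace ℝ (Fin d) | ∀ i, |x i| < 1 / 2}
        = ⋂ i, {x : EuclideanSpace ℝ (Fin d) | |x i| < 1 / 2} := by
      ext x; simp [Set.mem_iInter]
    rw [this]
    exact isOpen_iInter_of_finite fun i =>
      isOpen_lt (((continuous_apply i).comp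
        (PiLp.continuousLinearEquiv 2 ℝ _).continuous).abs) continuous_const
  have h0 : (0 : EuclideanSpace ℝ (Fin d)) ∈ {x : EuclideanSpace ℝ (Fin d) | ∀ i, |x i| < 1/2} := by
    intro i; simp only [PiLp.zero_apply, abs_zero]; norm_num
  have hev : f =ᶠ[𝓝 (0 : EuclideanSpace ℝ (Fin d))] 0 := by
    filter_upwards [hbox.mem_nhds h0] with x hx
    exact h x hx
  have hzero : Set.EqOn f 0 Set.univ :=
    (analytic_eval p).eqOn_zero_of_preconnected_of_eventuallyEq_zero
      isPreconnected_univ (Set.mem_univ _) hev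
  apply MvPolynomial.funext (q := 0)
  intro v
  have : f ((WithLp.equiv 2 (Fin d → ℝ)).symm v) = 0 := hzero (Set.mem_univ _)
  simpa using this

lemma polyB (d n : ℕ) : ∃ C : ℝ, 0 < C ∧ ∀ P ∈ PolyLE d n,
    (∫⁻ x in cube (0 : EuclideanSpace ℝ (Fin d)) 4, ENNReal.ofReal |P x|)
      ≤ ENNReal.ofReal C * ∫⁻ x in cube (0 : EuclideanSpace ℝ (Fin d)) 1, ENNReal.ofReal |P x| := by
  classical
  set E := EuclideanSpace ℝ (Fin d)
  set W := MvPolynomial.restrictTotalDegree (Fin d) ℝ n with hW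
  set N := finrank ℝ W with hN
  haveI : Module.Free ℝ ↥W := Module.Free.of_divisionRing ℝ _
  let B : Basis (Fin N) ℝ W := finBasis ℝ W
  set b : Fin N → MvPolynomial (Fin d) ℝ := fun j => (B j : MvPolynomial (Fin d) ℝ) with hb
  set g : Fin N → E → ℝ := fun j x => MvPolynomial.eval (fun i => x i) (b j) with hg
  have hgc : ∀ j, Continuous (g j) := fun j =>
    (MvPolynomial.continuous_eval (b j)).comp (continuous_pi continuous_coord)
  set F : (Fin N → ℝ) → E → ℝ := fun c x => ∑ j, c j * g j x with hF
  have hFc : ∀ c, Continuous (F c) := fun c =>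
    continuous_finset_sum _ fun j _ => continuous_const.mul (hgc j)
  -- F c = eval of the polynomial ∑ c j • b j
  have hFeval : ∀ c x, F c x = MvPolynomial.eval (fun i => x i) (∑ j, c j • b j) := by
    intro c x
    rw [map_sum]
    exact Finset.sum_congr rfl fun j _ => by rw [MvPolynomial.smul_eval]
  set I : ℝ → (Fin N → ℝ) → ℝ := fun s c => ∫ x in cube (0 : E) s, |F c x| with hI
  have hint : ∀ (s : ℝ), 0 ≤ s → ∀ (h : E → ℝ), Continuous h →
      IntegrableOn h (cube (0 : E) s) := fun s hs h hc =>
    hc.continuousOn.integrableOn_compact (isCompact_cube _ hs)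
  -- Lipschitz continuity of I s
  have hIcont : ∀ s : ℝ, 0 ≤ s → Continuous (I s) := by
    intro s hs
    have key : ∀ c c', |I s c - I s c'| ≤ (∑ j, ∫ x in cube (0 : E) s, |g j x|) * dist c c' := by
      intro c c'
      have h1 : I s c - I s c' = ∫ x in cube (0 : E) s, (|F c x| - |F c' x|) :=
        (integral_sub (hint s hs _ (hFc c).abs) (hint s hs _ (hFc c').abs)).symm
      rw [h1]
      refine le_trans (by
        simpa [Real.norm_eq_abs] using norm_integral_le_integral_norm
          (μ := volume.restrict (cube (0 : E) s)) (f := fun x => |F c x| - |F c' x|)) ?_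
      have h2 : ∀ x : E, |(|F c x| - |F c' x|)| ≤ ∑ j, |c j - c' j| * |g j x| := by
        intro x
        refine (abs_abs_sub_abs_le_abs_sub _ _).trans ?_
        have : F c x - F c' x = ∑ j, (c j - c' j) * g j x := by
          rw [← Finset.sum_sub_distrib]; congr 1; funext j; ring
        rw [this]
        refine (Finset.abs_sum_le_sum_abs _ _).trans ?_
        exact Finset.sum_le_sum fun j _ => le_of_eq (abs_mul _ _)
      refine (integral_mono (hint s hs _ ((hFc c).abs.sub (hFc c').abs).abs)
        ?_ h2).trans ?_
      · exact integrable_finset_sum _ fun j _ =>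
          hint s hs _ (continuous_const.mul (hgc j).abs)
      rw [integral_finset_sum _ (fun j _ => hint s hs (fun x => |c j - c' j| * |g j x|) (continuous_const.mul (hgc j).abs))]
      rw [Finset.sum_mul]
      refine Finset.sum_le_sum fun j _ => ?_
      rw [MeasureTheory.integral_const_mul]
      have hdj : |c j - c' j| ≤ dist c c' := by
        rw [← Real.dist_eq]; exact dist_le_pi_dist c c' j
      have hnn : 0 ≤ ∫ x in cube (0 : E) s, |g j x| :=
        integral_nonneg fun x => abs_nonneg _
      calc |c j - c' j| * ∫ x in cube (0 : E) s, |g j x|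
          ≤ dist c c' * ∫ x in cube (0 : E) s, |g j x| := by gcongr
        _ = _ := mul_comm _ _
    refine Metric.continuous_iff.2 fun c ε hε => ?_
    set L := ∑ j, ∫ x in cube (0 : E) s, |g j x|
    have hL : 0 ≤ L := Finset.sum_nonneg fun j _ => integral_nonneg fun x => abs_nonneg _
    refine ⟨ε / (L + 1), by positivity, fun c' hc' => ?_⟩
    rw [Real.dist_eq]
    calc |I s c' - I s c| ≤ L * dist c' c := key c' c
      _ ≤ L * (ε / (L + 1)) := mul_le_mul_of_nonneg_left hc'.le hL
      _ < ε := by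
          have h6 : L * (ε / (L + 1)) < (L + 1) * (ε / (L + 1)) :=
            mul_lt_mul_of_pos_right (by linarith) (by positivity)
          have h7 : (L + 1) * (ε / (L + 1)) = ε := by field_simp
          linarith
  -- positivity of I 1 away from 0
  have hIpos : ∀ c : Fin N → ℝ, c ≠ 0 → 0 < I 1 c := by
    intro c hc
    rcases lt_or_eq_of_le (integral_nonneg (fun x => abs_nonneg (F c x)) :
      (0:ℝ) ≤ I 1 c) with h | h
    · exact h
    exfalso
    -- I 1 c = 0; show F c vanishes on the open box
    have hbox : IsOpen {x : E | ∀ i, |x i| < 1 / 2} := by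
      have : {x : E | ∀ i, |x i| < 1 / 2} = ⋂ i, {x : E | |x i| < 1 / 2} := by
        ext x; simp [Set.mem_iInter]
      rw [this]
      exact isOpen_iInter_of_finite fun i => isOpen_lt (continuous_coord i).abs continuous_const
    have hFzero : ∀ x : E, (∀ i, |x i| < 1 / 2) → F c x = 0 := by
      by_contra hcon
      push_neg at hcon
      obtain ⟨y, hy, hFy⟩ := hcon
      set U := {x : E | ∀ i, |x i| < 1 / 2} ∩ {x : E | |F c y| / 2 < |F c x|} with hU
      have hUopen : IsOpen U := hbox.inter (isOpen_lt continuous_const (hFc c).abs)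
      have hyU : y ∈ U := ⟨hy, by
        simp only [Set.mem_setOf_eq]
        have := abs_pos.2 hFy; linarith⟩
      have hUsub : U ⊆ cube (0 : E) 1 := fun x hx i => by
        have h1 := hx.1 i
        have h2 : (0 : E) i = 0 := rfl
        rw [h2, sub_zero]
        linarith
      have hμU : 0 < volume U := hUopen.measure_pos volume ⟨y, hyU⟩
      have hμUtop : volume U ≠ ⊤ :=
        ((measure_mono hUsub).trans_lt (isCompact_cube _ (by norm_num)).measure_lt_top).ne
      have h3 : |F c y| / 2 * (volume U).toReal ≤ ∫ x in U, |F c x| := by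
        have := setIntegral_ge_of_const_le_real hUopen.measurableSet hμUtop
          (fun x hx => hx.2.le) ((hint 1 (by norm_num) _ (hFc c).abs).mono_set hUsub)
        exact this
      have h4 : ∫ x in U, |F c x| ≤ I 1 c :=
        setIntegral_mono_set (hint 1 (by norm_num) _ (hFc c).abs)
          (Filter.Eventually.of_forall fun x => abs_nonneg _)
          (HasSubset.Subset.eventuallyLE hUsub)
      have h5 : 0 < (volume U).toReal := ENNReal.toReal_pos hμU.ne' hμUtop
      nlinarith [abs_pos.2 hFy]
    -- conclude polynomial is zero hence c = 0
    have hp0 : (∑ j, c j • b j) = 0 := by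
      apply poly_eq_zero_of_zero_on_box
      intro x hx
      rw [← hFeval c x]
      exact hFzero x hx
    have hsum : (∑ j, c j • B j) = (0 : W) := by
      apply Subtype.coe_injective
      push_cast
      simpa using hp0
    have := Fintype.linearIndependent_iff.1 B.linearIndependent c hsum
    exact hc (funext this)
  -- homogeneity
  have hIhom : ∀ (s t : ℝ) (c : Fin N → ℝ), I s (t • c) = |t| * I s c := by
    intro s t c
    have : ∀ x : E, |F (t • c) x| = |t| * |F c x| := by
      intro x
      have : F (t • c) x = t * F c x := by
        simp only [hF, Pi.smul_apply, smul_eq_mul, Finset.mul_sum]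
        exact Finset.sum_congr rfl fun j _ => by ring
      rw [this, abs_mul]
    simp only [hI, this]
    exact MeasureTheory.integral_const_mul _ _
  -- nontriviality
  have hWnt : Nontrivial W := by
    refine ⟨⟨(1 : MvPolynomial (Fin d) ℝ), ?_⟩, 0, ?_⟩
    · rw [MvPolynomial.mem_restrictTotalDegree, totalDegree_one]; exact Nat.zero_le n
    · intro hcon
      have := congrArg Subtype.val hcon
      simp only [Submodule.coe_zero] at this
      exact one_ne_zero this
  haveI := hWnt
  have hNpos : 0 < N := finrank_pos
  haveI : Nonempty (Fin N) := ⟨⟨0, hNpos⟩⟩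
  haveI : Nontrivial (Fin N → ℝ) := by
    obtain ⟨j⟩ := (inferInstance : Nonempty (Fin N))
    exact ⟨(fun _ => 0), (fun _ => 1), fun hcon => by
      have := congrFun hcon j; norm_num at this⟩
  have hsph : (Metric.sphere (0 : Fin N → ℝ) 1).Nonempty :=
    NormedSpace.sphere_nonempty.2 (by norm_num)
  obtain ⟨cmin, hcminmem, hcminmin⟩ := (isCompact_sphere (0 : Fin N → ℝ) 1).exists_isMinOn
    hsph (hIcont 1 (by norm_num)).continuousOn
  obtain ⟨cmax, hcmaxmem, hcmaxmax⟩ := (isCompact_sphere (0 : Fin N → ℝ) 1).exists_isMaxOn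
    hsph (hIcont 4 (by norm_num)).continuousOn
  have hcmin : ∀ u ∈ Metric.sphere (0 : Fin N → ℝ) 1, I 1 cmin ≤ I 1 u := fun u hu => hcminmin hu
  have hcmax : ∀ u ∈ Metric.sphere (0 : Fin N → ℝ) 1, I 4 u ≤ I 4 cmax := fun u hu => hcmaxmax hu
  have hcmin0 : cmin ≠ 0 := by
    intro hcon
    rw [hcon] at hcminmem
    simp at hcminmem
  set m := I 1 cmin with hm
  set M := I 4 cmax with hMdef
  have hmpos : 0 < m := hIpos cmin hcmin0
  have hMnn : 0 ≤ M := integral_nonneg fun x => abs_nonneg _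
  have hkey : ∀ c : Fin N → ℝ, I 4 c ≤ (M / m + 1) * I 1 c := by
    intro c
    rcases eq_or_ne c 0 with rfl | hc
    · have hF0 : ∀ x : E, F (0 : Fin N → ℝ) x = 0 := fun x => by
        simp [hF]
      have hz : ∀ s : ℝ, I s (0 : Fin N → ℝ) = 0 := fun s => by
        simp only [hI, hF0, abs_zero]
        simp
      rw [hz 4, hz 1, mul_zero]
    · set u := ‖c‖⁻¹ • c with hu
      have hcn : ‖c‖ ≠ 0 := norm_ne_zero_iff.2 hc
      have humem : u ∈ Metric.sphere (0 : Fin N → ℝ) 1 := by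
        rw [mem_sphere_zero_iff_norm, hu, norm_smul, norm_inv, norm_norm,
          inv_mul_cancel₀ hcn]
      have hcu : ‖c‖ • u = c := by rw [hu, smul_inv_smul₀ hcn]
      have h1 : I 4 c = ‖c‖ * I 4 u := by
        rw [← hcu, hIhom, abs_of_nonneg (norm_nonneg c), hcu]
      have h2 : I 1 c = ‖c‖ * I 1 u := by
        rw [← hcu, hIhom, abs_of_nonneg (norm_nonneg c), hcu]
      have h3 : I 4 u ≤ M := hcmax u humem
      have h4 : m ≤ I 1 u := hcmin u humem
      have h5 : 0 ≤ ‖c‖ := norm_nonneg c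
      rw [h1, h2]
      calc ‖c‖ * I 4 u ≤ ‖c‖ * M := by gcongr
        _ = (M / m) * (‖c‖ * m) := by field_simp
        _ ≤ (M / m) * (‖c‖ * I 1 u) := by
            have h6 : 0 ≤ M / m := div_nonneg hMnn hmpos.le
            gcongr
        _ ≤ (M / m + 1) * (‖c‖ * I 1 u) := by
            have : 0 ≤ ‖c‖ * I 1 u := by nlinarith
            nlinarith [div_nonneg hMnn hmpos.le]
  refine ⟨M / m + 1, by positivity, fun P hP => ?_⟩
  obtain ⟨p, hdeg, hev⟩ := hP
  set pW : W := ⟨p, by rw [hW, MvPolynomial.mem_restrictTotalDegree]; exact hdeg⟩ with hpW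
  set c : Fin N → ℝ := fun j => B.repr pW j with hcdef
  have hsump : (∑ j, c j • b j) = p := by
    have h := B.sum_repr pW
    have h2 := congrArg (Subtype.val : W → MvPolynomial (Fin d) ℝ) h
    calc ∑ j, c j • b j
        = ((∑ j, B.repr pW j • B j : W) : MvPolynomial (Fin d) ℝ) := by push_cast; rfl
      _ = p := h2
  have hcP : ∀ x : E, F c x = P x := by
    intro x
    rw [hFeval c x, hsump, hev x]
  have hlint : ∀ s : ℝ, 0 ≤ s →
      (∫⁻ x in cube (0 : E) s, ENNReal.ofReal |P x|) = ENNReal.ofReal (I s c) := by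
    intro s hs
    have e1 : (∫⁻ x in cube (0 : E) s, ENNReal.ofReal |P x|)
        = ∫⁻ x in cube (0 : E) s, ENNReal.ofReal |F c x| :=
      lintegral_congr fun x => by rw [hcP x]
    rw [e1, ← MeasureTheory.ofReal_integral_eq_lintegral_ofReal
      (hint s hs _ (hFc c).abs) (Filter.Eventually.of_forall fun x => abs_nonneg _)]
  rw [hlint 4 (by norm_num), hlint 1 (by norm_num),
    ← ENNReal.ofReal_mul (by positivity)]
  exact ENNReal.ofReal_le_ofReal (hkey c)

lemma lintegral_affine_sub {x₁ : EuclideanSpace ℝ (Fin d)} {l : ℝ} (hl : 0 < l)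
    {g : EuclideanSpace ℝ (Fin d) → ℝ≥0∞} (hg : Measurable g)
    {s : Set (EuclideanSpace ℝ (Fin d))} (hs : MeasurableSet s) :
    ∫⁻ x in s, g x = ENNReal.ofReal (l ^ d) *
      ∫⁻ y in (fun y : EuclideanSpace ℝ (Fin d) => x₁ + l • y) ⁻¹' s, g (x₁ + l • y) := by
  have hΦm : Measurable (fun y : EuclideanSpace ℝ (Fin d) => x₁ + l • y) :=
    (continuous_const.add (continuous_id.const_smul l)).measurable
  have hmap : Measure.map (fun y : EuclideanSpace ℝ (Fin d) => x₁ + l • y)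
      (volume : Measure (EuclideanSpace ℝ (Fin d)))
      = (ENNReal.ofReal (l ^ d))⁻¹ • volume := by
    have h2 : Measure.map (fun y : EuclideanSpace ℝ (Fin d) => l • y)
        (volume : Measure (EuclideanSpace ℝ (Fin d)))
        = ENNReal.ofReal |(l ^ finrank ℝ (EuclideanSpace ℝ (Fin d)))⁻¹| • volume :=
      Measure.map_addHaar_smul (volume : Measure (EuclideanSpace ℝ (Fin d))) hl.ne'
    have h3 : Measure.map (fun y : EuclideanSpace ℝ (Fin d) => x₁ + l • y)
        (volume : Measure (EuclideanSpace ℝ (Fin d)))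
        = Measure.map (fun z : EuclideanSpace ℝ (Fin d) => x₁ + z)
          (Measure.map (fun y : EuclideanSpace ℝ (Fin d) => l • y) volume) := by
      have hsm : Measurable (fun y : EuclideanSpace ℝ (Fin d) => l • y) :=
        (continuous_const_smul l).measurable
      rw [Measure.map_map (measurable_const_add x₁) hsm]
      rfl
    rw [h3, h2, Measure.map_smul, map_add_left_eq_self]
    congr 1
    rw [finrank_euclideanSpace_fin, abs_of_pos (by positivity : (0:ℝ) < (l ^ d)⁻¹),
      ENNReal.ofReal_inv_of_pos (by positivity)]
  have hlne : ENNReal.ofReal (l ^ d) ≠ 0 := by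
    simp only [ne_eq, ENNReal.ofReal_eq_zero, not_le]
    positivity
  have hltop : ENNReal.ofReal (l ^ d) ≠ ⊤ := ENNReal.ofReal_ne_top
  have h1 : ∫⁻ y in s, g y
      ∂(Measure.map (fun y : EuclideanSpace ℝ (Fin d) => x₁ + l • y) volume)
      = ∫⁻ x in (fun y : EuclideanSpace ℝ (Fin d) => x₁ + l • y) ⁻¹' s, g (x₁ + l • x) :=
    setLIntegral_map hs hg hΦm
  rw [hmap, Measure.restrict_smul, lintegral_smul_measure] at h1
  rw [← h1, smul_eq_mul, ← mul_assoc, ENNReal.mul_inv_cancel hlne hltop, one_mul]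

lemma polyA (d n : ℕ) : ∃ C : ℝ, 0 < C ∧
    ∀ (x₁ x₂ : EuclideanSpace ℝ (Fin d)) (l₁ l₂ : ℝ), 0 < l₁ →
      cube x₂ l₂ ⊆ cube x₁ (4 * l₁) →
      ∀ P ∈ PolyLE d n,
        (∫⁻ x in cube x₂ l₂, ENNReal.ofReal |P x|)
          ≤ ENNReal.ofReal C * ∫⁻ x in cube x₁ l₁, ENNReal.ofReal |P x| := by
  obtain ⟨C, hC, hB⟩ := polyB d n
  refine ⟨C, hC, fun x₁ x₂ l₁ l₂ hl₁ hsub P hP => ?_⟩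
  set Φ : EuclideanSpace ℝ (Fin d) → EuclideanSpace ℝ (Fin d) := fun y => x₁ + l₁ • y with hΦ
  set g : EuclideanSpace ℝ (Fin d) → ℝ≥0∞ := fun x => ENNReal.ofReal |P x| with hgdef
  have hgm : Measurable g :=
    (polyLE_continuous hP).abs.measurable.ennreal_ofReal
  have hQ : (fun y => P (x₁ + l₁ • y)) ∈ PolyLE d n := polyLE_comp_affine hP x₁ l₁
  have e2 : Φ ⁻¹' cube x₁ (4 * l₁) = cube 0 4 := by
    rw [preimage_affine_cube x₁ hl₁]
    congr 1
    field_simp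
  have e1 : Φ ⁻¹' cube x₁ l₁ = cube 0 1 := by
    rw [preimage_affine_cube x₁ hl₁, div_self hl₁.ne']
  calc (∫⁻ x in cube x₂ l₂, g x)
      = ENNReal.ofReal (l₁ ^ d) * ∫⁻ y in Φ ⁻¹' cube x₂ l₂, g (Φ y) :=
        lintegral_affine_sub hl₁ hgm (measurableSet_cube x₂ l₂)
    _ ≤ ENNReal.ofReal (l₁ ^ d) * ∫⁻ y in cube (0 : EuclideanSpace ℝ (Fin d)) 4, g (Φ y) := by
        gcongr
        rw [← e2]; exact Set.preimage_mono hsub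
    _ ≤ ENNReal.ofReal (l₁ ^ d) *
          (ENNReal.ofReal C * ∫⁻ y in cube (0 : EuclideanSpace ℝ (Fin d)) 1, g (Φ y)) := by
        gcongr
        exact hB _ hQ
    _ = ENNReal.ofReal C *
          (ENNReal.ofReal (l₁ ^ d) * ∫⁻ y in Φ ⁻¹' cube x₁ l₁, g (Φ y)) := by
        rw [e1]; ring
    _ = ENNReal.ofReal C * ∫⁻ x in cube x₁ l₁, g x := by
        rw [← lintegral_affine_sub hl₁ hgm (measurableSet_cube x₁ l₁)]

lemma side_le_side (hd : 0 < d) {x₁ x₂ : EuclideanSpace ℝ (Fin d)} {l₁ l₂ : ℝ}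
    (hl₁ : 0 < l₁) (hsub : cube x₁ l₁ ⊆ cube x₂ l₂) : l₁ ≤ l₂ := by
  set i : Fin d := ⟨0, hd⟩
  set u : EuclideanSpace ℝ (Fin d) := x₁ + (l₁ / 2) • EuclideanSpace.single i (1:ℝ) with hu
  set v : EuclideanSpace ℝ (Fin d) := x₁ - (l₁ / 2) • EuclideanSpace.single i (1:ℝ) with hv
  have happ : ∀ j, (EuclideanSpace.single i (1:ℝ)) j = if j = i then 1 else 0 := fun j =>
    EuclideanSpace.single_apply i 1 j
  have humem : u ∈ cube x₁ l₁ := by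
    intro j
    rw [hu]
    simp only [PiLp.add_apply, PiLp.smul_apply, smul_eq_mul, add_sub_cancel_left, happ j]
    by_cases h : j = i <;> simp [h, abs_of_nonneg (by positivity : (0:ℝ) ≤ l₁ / 2)] <;> positivity
  have hvmem : v ∈ cube x₁ l₁ := by
    intro j
    rw [hv]
    simp only [PiLp.sub_apply, PiLp.smul_apply, smul_eq_mul, sub_sub_cancel_left, abs_neg]
    rw [happ j]
    by_cases h : j = i <;> simp [h, abs_of_nonneg (by positivity : (0:ℝ) ≤ l₁ / 2)] <;> positivity
  have h1 := hsub humem i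
  have h2 := hsub hvmem i
  have hui : u i - v i = l₁ := by
    rw [hu, hv]
    simp only [PiLp.add_apply, PiLp.sub_apply, PiLp.smul_apply, smul_eq_mul, happ i, if_pos rfl]
    ring_nf
    simp
  have := abs_sub_abs_le_abs_sub (u i - x₂ i) (v i - x₂ i)
  have h3 : |u i - v i| ≤ |u i - x₂ i| + |v i - x₂ i| := by
    have : u i - v i = (u i - x₂ i) - (v i - x₂ i) := by ring
    rw [this]
    exact abs_sub _ _
  rw [hui, abs_of_pos hl₁] at h3
  linarith

end Helpers

/-- Near best approximation polynomials on nested cubes `Q₁ ⊆ Q₂ ⊆ 4Q₁` differ in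
average by at most `C ω(ℓ₂) ‖f‖_{ω,D}`. -/
theorem statement_8 {d : ℕ} (n : ℕ) (ω : ℝ → ℝ) (hω : IsModulusOfOrder ω n)
    (C₀ : ℝ) (hC₀ : 0 < C₀) :
    ∃ C : ℝ, 0 < C ∧
      ∀ (D : Set (EuclideanSpace ℝ (Fin d))), IsOpen D → IsConnected D →
        ∀ f : EuclideanSpace ℝ (Fin d) → ℝ,
          LocallyIntegrableOn f D → zygSeminorm ω n D f < ⊤ →
          ∀ (x₁ x₂ : EuclideanSpace ℝ (Fin d)) (l₁ l₂ : ℝ), 0 < l₁ → 0 < l₂ →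
            cube x₁ l₁ ⊆ cube x₂ l₂ → cube x₂ l₂ ⊆ cube x₁ (4 * l₁) →
            cube x₂ l₂ ⊆ D →
            ∀ P₁ P₂ : EuclideanSpace ℝ (Fin d) → ℝ,
              IsNearBestApprox ω n D f C₀ x₁ l₁ P₁ →
              IsNearBestApprox ω n D f C₀ x₂ l₂ P₂ →
              (ENNReal.ofReal (l₂ ^ d))⁻¹ *
                  ∫⁻ x in cube x₂ l₂, ENNReal.ofReal |P₁ x - P₂ x| ≤
                ENNReal.ofReal (C * ω l₂) * zygSeminorm ω n D f := by
  obtain ⟨Ca, hCa, hA⟩ := polyA d n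
  refine ⟨2 * Ca * C₀, by positivity, ?_⟩
  intro D hDopen hDconn f hfli hZfin x₁ x₂ l₁ l₂ hl₁ hl₂ hsub12 hsub24 hsubD P₁ P₂ hP₁ hP₂
  obtain ⟨hP₁mem, hP₁le⟩ := hP₁
  obtain ⟨hP₂mem, hP₂le⟩ := hP₂
  set Z := zygSeminorm ω n D f with hZdef
  rcases Nat.eq_zero_or_pos d with hd | hd
  · -- degenerate case d = 0
    subst hd
    haveI : Subsingleton (EuclideanSpace ℝ (Fin 0)) :=
      ⟨fun a b => PiLp.ext fun i => i.elim0⟩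
    have hcu : ∀ (x₀ : EuclideanSpace ℝ (Fin 0)) (l : ℝ), cube x₀ l = Set.univ :=
      fun x₀ l => Set.eq_univ_of_forall fun x i => i.elim0
    have hZ0 : Z = 0 := by
      refine le_antisymm ?_ zero_le
      rw [hZdef, zygSeminorm]
      refine iSup_le fun x₀ => iSup_le fun l => iSup_le fun hl => iSup_le fun hs => ?_
      refine iInf_le_of_le (fun _ => f x₀) (iInf_le_of_le (polyLE_const (f x₀)) ?_)
      have hzero : ∀ x ∈ cube x₀ l, ENNReal.ofReal |f x - f x₀| = (0 : ℝ≥0∞) := fun x _ => by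
        rw [Subsingleton.elim x x₀]; simp
      rw [setLIntegral_congr_fun (measurableSet_cube x₀ l)
        hzero, lintegral_zero, mul_zero]
    rw [hZ0] at hP₁le hP₂le ⊢
    rw [mul_zero] at hP₁le hP₂le
    simp only [pow_zero, ENNReal.ofReal_one, inv_one, one_mul] at hP₁le hP₂le
    have h₁ : (∫⁻ x in cube x₁ l₁, ENNReal.ofReal |f x - P₁ x|) = 0 :=
      le_antisymm hP₁le zero_le
    have h₂ : (∫⁻ x in cube x₂ l₂, ENNReal.ofReal |f x - P₂ x|) = 0 :=
      le_antisymm hP₂le zero_le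
    have hconst1 : (∫⁻ x in cube x₁ l₁, ENNReal.ofReal |f x - P₁ x|)
        = ENNReal.ofReal |f x₂ - P₁ x₂| * volume (cube x₂ l₂) := by
      have he : (∫⁻ x in cube x₁ l₁, ENNReal.ofReal |f x - P₁ x|)
          = ∫⁻ _x in cube x₁ l₁, ENNReal.ofReal |f x₂ - P₁ x₂| :=
        setLIntegral_congr_fun (measurableSet_cube x₁ l₁)
          (fun ⦃x⦄ _ => by rw [Subsingleton.elim x x₂])
      rw [he, setLIntegral_const, hcu x₁ l₁, hcu x₂ l₂]
    have hconst2 : (∫⁻ x in cube x₂ l₂, ENNReal.ofReal |f x - P₂ x|)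
        = ENNReal.ofReal |f x₂ - P₂ x₂| * volume (cube x₂ l₂) := by
      have he : (∫⁻ x in cube x₂ l₂, ENNReal.ofReal |f x - P₂ x|)
          = ∫⁻ _x in cube x₂ l₂, ENNReal.ofReal |f x₂ - P₂ x₂| :=
        setLIntegral_congr_fun (measurableSet_cube x₂ l₂)
          (fun ⦃x⦄ _ => by rw [Subsingleton.elim x x₂])
      rw [he, setLIntegral_const]
    have hgoal0 : (∫⁻ x in cube x₂ l₂, ENNReal.ofReal |P₁ x - P₂ x|) = 0 := by
      have hc : (∫⁻ x in cube x₂ l₂, ENNReal.ofReal |P₁ x - P₂ x|)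
          = ENNReal.ofReal |P₁ x₂ - P₂ x₂| * volume (cube x₂ l₂) := by
        have he : (∫⁻ x in cube x₂ l₂, ENNReal.ofReal |P₁ x - P₂ x|)
            = ∫⁻ _x in cube x₂ l₂, ENNReal.ofReal |P₁ x₂ - P₂ x₂| :=
          setLIntegral_congr_fun (measurableSet_cube x₂ l₂)
            (fun ⦃x⦄ _ => by rw [Subsingleton.elim x x₂])
        rw [he, setLIntegral_const]
      rw [hc]
      refine le_antisymm ?_ zero_le
      have hpt : ENNReal.ofReal |P₁ x₂ - P₂ x₂|
          ≤ ENNReal.ofReal |f x₂ - P₁ x₂| + ENNReal.ofReal |f x₂ - P₂ x₂| := by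
        rw [← ENNReal.ofReal_add (abs_nonneg _) (abs_nonneg _)]
        refine ENNReal.ofReal_le_ofReal ?_
        have he : P₁ x₂ - P₂ x₂ = (f x₂ - P₂ x₂) - (f x₂ - P₁ x₂) := by ring
        rw [he]
        exact (abs_sub _ _).trans (by rw [add_comm])
      calc ENNReal.ofReal |P₁ x₂ - P₂ x₂| * volume (cube x₂ l₂)
          ≤ (ENNReal.ofReal |f x₂ - P₁ x₂| + ENNReal.ofReal |f x₂ - P₂ x₂|)
              * volume (cube x₂ l₂) := mul_le_mul_left hpt _
        _ = ENNReal.ofReal |f x₂ - P₁ x₂| * volume (cube x₂ l₂)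
              + ENNReal.ofReal |f x₂ - P₂ x₂| * volume (cube x₂ l₂) := add_mul _ _ _
        _ = 0 := by rw [← hconst1, ← hconst2, h₁, h₂, add_zero]
    rw [hgoal0, mul_zero]
    exact zero_le
  · -- main case d > 0
    have hl₁₂ : l₁ ≤ l₂ := side_le_side hd hl₁ hsub12
    have hω₁ : 0 ≤ ω l₁ := hω.nonneg l₁ hl₁.le
    have hω₂ : 0 ≤ ω l₂ := hω.nonneg l₂ hl₂.le
    have hω₁₂ : ω l₁ ≤ ω l₂ := hω.monotoneOn hl₁.le hl₂.le hl₁₂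
    set a₁ := ENNReal.ofReal (l₁ ^ d) with ha₁
    set a₂ := ENNReal.ofReal (l₂ ^ d) with ha₂
    have ha₁0 : a₁ ≠ 0 := by
      simp only [ha₁, ne_eq, ENNReal.ofReal_eq_zero, not_le]; positivity
    have ha₂0 : a₂ ≠ 0 := by
      simp only [ha₂, ne_eq, ENNReal.ofReal_eq_zero, not_le]; positivity
    have ha₁top : a₁ ≠ ⊤ := ENNReal.ofReal_ne_top
    have ha₂top : a₂ ≠ ⊤ := ENNReal.ofReal_ne_top
    set K := ENNReal.ofReal (l₂ ^ d * (C₀ * ω l₂)) with hK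
    have hA₁ : (∫⁻ x in cube x₁ l₁, ENNReal.ofReal |f x - P₁ x|) ≤ K * Z := by
      have h := mul_le_mul_right hP₁le a₁
      rw [← mul_assoc, ENNReal.mul_inv_cancel ha₁0 ha₁top, one_mul] at h
      refine h.trans ?_
      rw [← mul_assoc]
      refine mul_le_mul_left ?_ Z
      rw [ha₁, ← ENNReal.ofReal_mul (by positivity), hK]
      refine ENNReal.ofReal_le_ofReal ?_
      have h1 : l₁ ^ d ≤ l₂ ^ d := pow_le_pow_left₀ hl₁.le hl₁₂ d
      have h2 : C₀ * ω l₁ ≤ C₀ * ω l₂ := mul_le_mul_of_nonneg_left hω₁₂ hC₀.le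
      exact mul_le_mul h1 h2 (mul_nonneg hC₀.le hω₁) (pow_nonneg (by linarith) d)
    have hA₂ : (∫⁻ x in cube x₂ l₂, ENNReal.ofReal |f x - P₂ x|) ≤ K * Z := by
      have h := mul_le_mul_right hP₂le a₂
      rw [← mul_assoc, ENNReal.mul_inv_cancel ha₂0 ha₂top, one_mul] at h
      refine h.trans (le_of_eq ?_)
      rw [← mul_assoc, ha₂, ← ENNReal.ofReal_mul (by positivity), hK]
    -- measurability of the f-terms on Q₁
    have hfint : IntegrableOn f (cube x₁ l₁) volume :=
      hfli.integrableOn_compact_subset (hsub12.trans hsubD) (isCompact_cube x₁ hl₁.le)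
    have hfae : AEMeasurable f (volume.restrict (cube x₁ l₁)) := hfint.aemeasurable
    have hg1 : AEMeasurable (fun x => ENNReal.ofReal |f x - P₁ x|)
        (volume.restrict (cube x₁ l₁)) := by
      refine ENNReal.measurable_ofReal.comp_aemeasurable ?_
      exact continuous_abs.measurable.comp_aemeasurable
        (hfae.sub (polyLE_continuous hP₁mem).measurable.aemeasurable)
    -- triangle inequality on Q₁
    have hS₁ : (∫⁻ x in cube x₁ l₁, ENNReal.ofReal |P₁ x - P₂ x|) ≤ K * Z + K * Z := by
      have hpt : ∀ x, ENNReal.ofReal |P₁ x - P₂ x|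
          ≤ ENNReal.ofReal |f x - P₁ x| + ENNReal.ofReal |f x - P₂ x| := by
        intro x
        rw [← ENNReal.ofReal_add (abs_nonneg _) (abs_nonneg _)]
        refine ENNReal.ofReal_le_ofReal ?_
        have he : P₁ x - P₂ x = (f x - P₂ x) - (f x - P₁ x) := by ring
        rw [he]
        exact (abs_sub _ _).trans (by rw [add_comm])
      calc (∫⁻ x in cube x₁ l₁, ENNReal.ofReal |P₁ x - P₂ x|)
          ≤ ∫⁻ x in cube x₁ l₁,
              (ENNReal.ofReal |f x - P₁ x| + ENNReal.ofReal |f x - P₂ x|) :=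
            lintegral_mono hpt
        _ = (∫⁻ x in cube x₁ l₁, ENNReal.ofReal |f x - P₁ x|)
              + ∫⁻ x in cube x₁ l₁, ENNReal.ofReal |f x - P₂ x| :=
            lintegral_add_left' hg1 _
        _ ≤ (∫⁻ x in cube x₁ l₁, ENNReal.ofReal |f x - P₁ x|)
              + ∫⁻ x in cube x₂ l₂, ENNReal.ofReal |f x - P₂ x| := by
            gcongr
        _ ≤ K * Z + K * Z := add_le_add hA₁ hA₂
    have hT : (∫⁻ x in cube x₂ l₂, ENNReal.ofReal |P₁ x - P₂ x|)
        ≤ ENNReal.ofReal Ca * (K * Z + K * Z) := by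
      have h := hA x₁ x₂ l₁ l₂ hl₁ hsub24 (fun x => P₁ x - P₂ x)
        (polyLE_sub hP₁mem hP₂mem)
      exact h.trans (mul_le_mul_right hS₁ _)
    calc a₂⁻¹ * ∫⁻ x in cube x₂ l₂, ENNReal.ofReal |P₁ x - P₂ x|
        ≤ a₂⁻¹ * (ENNReal.ofReal Ca * (K * Z + K * Z)) := mul_le_mul_right hT _
      _ = ENNReal.ofReal (2 * Ca * C₀ * ω l₂) * Z := by
          have hKsplit : K = a₂ * ENNReal.ofReal (C₀ * ω l₂) := by
            rw [hK, ha₂, ← ENNReal.ofReal_mul (by positivity)]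
          rw [hKsplit]
          have step1 : a₂⁻¹ * (ENNReal.ofReal Ca *
              (a₂ * ENNReal.ofReal (C₀ * ω l₂) * Z + a₂ * ENNReal.ofReal (C₀ * ω l₂) * Z))
              = (a₂⁻¹ * a₂) * (ENNReal.ofReal Ca *
                (ENNReal.ofReal (C₀ * ω l₂) * Z + ENNReal.ofReal (C₀ * ω l₂) * Z)) := by
            ring
          rw [step1, ENNReal.inv_mul_cancel ha₂0 ha₂top, one_mul]
          have step2 : ENNReal.ofReal Ca *
              (ENNReal.ofReal (C₀ * ω l₂) * Z + ENNReal.ofReal (C₀ * ω l₂) * Z)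
              = (ENNReal.ofReal Ca * (2 * ENNReal.ofReal (C₀ * ω l₂))) * Z := by
            ring
          rw [step2]
          congr 1
          rw [show (2 : ℝ≥0∞) = ENNReal.ofReal 2 by norm_num,
            ← ENNReal.ofReal_mul (by norm_num), ← ENNReal.ofReal_mul hCa.le]
          congr 1
          ring


end
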